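/- Let V be a real separable reflexive Banach space with continuous dual V*. Suppose T : V → V* is (i) monotone: ⟨T(u) − T(v), u − v⟩ ≥ 0 for all u, v ∈ V; (ii) coercive: ⟨T(v), v⟩/‖v‖ → ∞ as ‖v‖ → ∞; and (iii) demicontinuous: whenever v_k → v in the norm of V, ⟨T(v_k), u⟩ → ⟨T(v), u⟩ for every u ∈ V. Then T is surjective, i.e., for every f ∈ V* there exists u ∈ V with T(u) = f. If moreover T is strictly monotone, i.e., ⟨T(u) − T(v), u − v⟩ > 0 whenever u ≠ v, then T is also injective, hence bijective. -/

import Mathlib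

open Filter Topology Module
open scoped RealInnerProductSpace

-- Auxiliary: surjectivity of strongly monotone continuous maps in finite dimensions,
-- proved by induction on the dimension (intermediate value theorem in each step).

private lemma mb_sm_eq {E : Type*} [NormedAddCommGroup E] [InnerProductSpace ℝ E]
    {c : ℝ} (hc : 0 < c) {F : E → E}
    (hm : ∀ x y : E, c * ‖x - y‖ ^ 2 ≤ ⟪F x - F y, x - y⟫) {x y : E}
    (h : F x = F y) : x = y := by
  have h1 := hm x y
  rw [h, sub_self, inner_zero_left] at h1
  have h3 : ‖x - y‖ = 0 := by
    by_contra hne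
    have h0 : 0 < ‖x - y‖ := lt_of_le_of_ne (norm_nonneg _) (Ne.symm hne)
    nlinarith [mul_pos hc (mul_pos h0 h0)]
  rwa [norm_sub_eq_zero_iff] at h3

set_option maxHeartbeats 1000000 in
private theorem mb_strongMono_surjective : ∀ (n : ℕ) (E : Type) [NormedAddCommGroup E]
    [InnerProductSpace ℝ E] [FiniteDimensional ℝ E], finrank ℝ E = n →
    ∀ (c : ℝ), 0 < c → ∀ F : E → E, Continuous F →
    (∀ x y : E, c * ‖x - y‖ ^ 2 ≤ ⟪F x - F y, x - y⟫) → Function.Surjective F := by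
  intro n
  induction n with
  | zero =>
    intro E _ _ _ hrank c hc F hF hm b
    have hsub : Subsingleton E := finrank_zero_iff.mp hrank
    exact ⟨0, Subsingleton.elim _ _⟩
  | succ n ih =>
    intro E _ _ _ hrank c hc F hF hm b
    have hnt : Nontrivial E := Module.nontrivial_of_finrank_eq_succ hrank
    obtain ⟨e0, he0⟩ := exists_ne (0 : E)
    set e : E := ‖e0‖⁻¹ • e0 with he_def
    have he : ‖e‖ = 1 := norm_smul_inv_norm he0
    have he_ne : e ≠ 0 := by
      intro h; rw [h, norm_zero] at he; norm_num at he
    have hee : ⟪e, e⟫ = (1 : ℝ) := by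
      rw [real_inner_self_eq_norm_sq, he]; norm_num
    set K : Submodule ℝ E := (ℝ ∙ e)ᗮ with hK_def
    have hKrank : finrank ℝ K = n := by
      have : Fact (finrank ℝ E = n + 1) := ⟨hrank⟩
      exact Submodule.finrank_orthogonal_span_singleton he_ne
    -- inner of e with elements of K vanishes
    have hKe : ∀ k : K, ⟪e, (k : E)⟫ = 0 := fun k =>
      Submodule.mem_orthogonal_singleton_iff_inner_right.mp k.2
    -- the "projection" onto K
    have hQmem : ∀ z : E, z - ⟪z, e⟫ • e ∈ K := by
      intro z
      rw [Submodule.mem_orthogonal_singleton_iff_inner_right]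
      rw [inner_sub_right, real_inner_smul_right, hee, real_inner_comm]
      ring
    set Q : E → K := fun z => ⟨z - ⟪z, e⟫ • e, hQmem z⟩ with hQ_def
    have hQcont : Continuous Q := by
      apply Continuous.subtype_mk
      exact continuous_id.sub (((continuous_id.inner continuous_const)).smul continuous_const)
    have hQcoe : ∀ z : E, ((Q z : K) : E) = z - ⟪z, e⟫ • e := fun z => rfl
    -- key inner product identity
    have hQinner : ∀ z z' : E, ∀ k : K, ⟪Q z - Q z', k⟫ = ⟪z - z', (k : E)⟫ := by
      intro z z' k
      rw [Submodule.coe_inner]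
      push_cast [hQcoe]
      rw [show z - ⟪z, e⟫ • e - (z' - ⟪z', e⟫ • e)
            = (z - z') - (⟪z, e⟫ - ⟪z', e⟫) • e by module]
      rw [inner_sub_left, real_inner_smul_left, hKe k]
      ring
    -- the family of maps on K
    set G : ℝ → K → K := fun t y => Q (F ((y : E) + t • e)) with hG_def
    have hGcont : ∀ t, Continuous (G t) := fun t =>
      hQcont.comp (hF.comp (continuous_subtype_val.add continuous_const))
    have hGmono : ∀ t, ∀ y y' : K, c * ‖y - y'‖ ^ 2 ≤ ⟪G t y - G t y', y - y'⟫ := by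
      intro t y y'
      have hsub : ((y : E) + t • e) - ((y' : E) + t • e) = ((y - y' : K) : E) := by
        push_cast; abel
      calc c * ‖y - y'‖ ^ 2 = c * ‖(((y - y' : K)) : E)‖ ^ 2 := by rw [Submodule.norm_coe]
        _ ≤ ⟪F ((y : E) + t • e) - F ((y' : E) + t • e), (((y - y' : K)) : E)⟫ := by
            rw [← hsub]; exact hm _ _
        _ = ⟪G t y - G t y', y - y'⟫ := by rw [hQinner]
    -- solve on K for each t
    have hGsurj : ∀ t, Function.Surjective (G t) := fun t =>
      ih K hKrank c hc (G t) (hGcont t) (hGmono t)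
    set yf : ℝ → K := fun t => Classical.choose (hGsurj t (Q b)) with hyf_def
    have hyf : ∀ t, G t (yf t) = Q b := fun t => Classical.choose_spec (hGsurj t (Q b))
    -- continuity of yf
    have hyf_bound : ∀ s t : ℝ, c * ‖yf t - yf s‖ ≤ ‖G s (yf s) - G t (yf s)‖ := by
      intro s t
      have h1 : c * ‖yf t - yf s‖ ^ 2 ≤ ⟪G t (yf t) - G t (yf s), yf t - yf s⟫ :=
        hGmono t _ _
      rw [hyf t, ← hyf s] at h1
      have h2 : ⟪G s (yf s) - G t (yf s), yf t - yf s⟫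
          ≤ ‖G s (yf s) - G t (yf s)‖ * ‖yf t - yf s‖ := real_inner_le_norm _ _
      by_cases h0 : ‖yf t - yf s‖ = 0
      · rw [h0, mul_zero]; exact norm_nonneg _
      · have h0' : 0 < ‖yf t - yf s‖ := lt_of_le_of_ne (norm_nonneg _) (Ne.symm h0)
        have h3 := le_trans h1 h2
        exact le_of_mul_le_mul_right (by nlinarith) h0'
    have hyf_cont : Continuous yf := by
      rw [continuous_iff_continuousAt]
      intro s
      rw [ContinuousAt, tendsto_iff_dist_tendsto_zero]
      have hgc : Continuous fun t : ℝ => ‖G s (yf s) - G t (yf s)‖ / c := by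
        apply Continuous.div_const
        apply Continuous.norm
        apply continuous_const.sub
        exact hQcont.comp (hF.comp (continuous_const.add ((continuous_id.smul
          (continuous_const : Continuous fun _ : ℝ => e)))))
      have hg0 : Tendsto (fun t : ℝ => ‖G s (yf s) - G t (yf s)‖ / c) (𝓝 s) (𝓝 0) := by
        have := hgc.tendsto s
        simpa using this
      apply squeeze_zero (fun t => dist_nonneg) _ hg0
      intro t
      rw [dist_eq_norm]
      rw [le_div_iff₀ hc, mul_comm]
      exact hyf_bound s t
    -- the scalar function h
    set hh : ℝ → ℝ := fun t => ⟪F ((yf t : E) + t • e), e⟫ with hh_def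
    have hhcont : Continuous hh := by
      apply Continuous.inner _ continuous_const
      exact hF.comp ((continuous_subtype_val.comp hyf_cont).add
        (continuous_id.smul continuous_const))
    have hhmono : ∀ s t : ℝ, c * (t - s) ^ 2 ≤ (hh t - hh s) * (t - s) := by
      intro s t
      set at_ : E := (yf t : E) + t • e with hat
      set as_ : E := (yf s : E) + s • e with has
      have hdecomp : at_ - as_ = ((yf t - yf s : K) : E) + (t - s) • e := by
        rw [hat, has]; push_cast; rw [sub_smul]; abel
      have hinner1 : ⟪F at_ - F as_, ((yf t - yf s : K) : E)⟫ = 0 := by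
        have := hQinner (F at_) (F as_) (yf t - yf s)
        rw [← this]
        have h1 : Q (F at_) = Q b := hyf t
        have h2 : Q (F as_) = Q b := hyf s
        rw [h1, h2, sub_self, inner_zero_left]
      have hinner2 : ⟪F at_ - F as_, at_ - as_⟫ = (hh t - hh s) * (t - s) := by
        rw [hdecomp, inner_add_right, hinner1, zero_add, real_inner_smul_right,
          inner_sub_left]
        ring
      have hlow : c * (t - s) ^ 2 ≤ c * ‖at_ - as_‖ ^ 2 := by
        apply mul_le_mul_of_nonneg_left _ (le_of_lt hc)
        have habs : |t - s| ≤ ‖at_ - as_‖ := by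
          have h1 : ⟪at_ - as_, e⟫ = t - s := by
            rw [hdecomp, inner_add_left, real_inner_smul_left, hee,
              real_inner_comm, hKe]
            ring
          calc |t - s| = |⟪at_ - as_, e⟫| := by rw [h1]
            _ ≤ ‖at_ - as_‖ * ‖e‖ := abs_real_inner_le_norm _ _
            _ = ‖at_ - as_‖ := by rw [he, mul_one]
        calc (t - s) ^ 2 = |t - s| ^ 2 := by rw [sq_abs]
          _ ≤ ‖at_ - as_‖ ^ 2 := by
              apply pow_le_pow_left₀ (abs_nonneg _) habs
      calc c * (t - s) ^ 2 ≤ c * ‖at_ - as_‖ ^ 2 := hlow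
        _ ≤ ⟪F at_ - F as_, at_ - as_⟫ := hm _ _
        _ = (hh t - hh s) * (t - s) := hinner2
    have hhmono' : ∀ s t : ℝ, s ≤ t → hh s + c * (t - s) ≤ hh t := by
      intro s t hst
      rcases eq_or_lt_of_le hst with h | h
      · rw [h]; simp
      · have h1 := hhmono s t
        have h2 : 0 < t - s := by linarith
        nlinarith
    -- solve hh t = ⟪b, e⟫ by IVT
    set β : ℝ := ⟪b, e⟫ with hβ
    obtain ⟨tst, htst⟩ : ∃ t : ℝ, hh t = β := by
      set t2 : ℝ := max 0 ((β - hh 0) / c)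
      set t1 : ℝ := min 0 ((β - hh 0) / c)
      have ht12 : t1 ≤ t2 := le_trans (min_le_left _ _) (le_max_left _ _)
      have hup : β ≤ hh t2 := by
        have h1 := hhmono' 0 t2 (le_max_left _ _)
        have h2 : (β - hh 0) / c ≤ t2 := le_max_right _ _
        rw [div_le_iff₀ hc] at h2
        nlinarith
      have hdown : hh t1 ≤ β := by
        have h1 := hhmono' t1 0 (min_le_left _ _)
        have h2 : t1 ≤ (β - hh 0) / c := min_le_right _ _
        rw [le_div_iff₀ hc] at h2
        nlinarith
      have := intermediate_value_Icc ht12 hhcont.continuousOn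
      obtain ⟨tst, _, htst⟩ := this ⟨hdown, hup⟩
      exact ⟨tst, htst⟩
    -- conclude
    refine ⟨(yf tst : E) + tst • e, ?_⟩
    have hq : Q (F ((yf tst : E) + tst • e)) = Q b := hyf tst
    have hqcoe := congrArg (Subtype.val) hq
    rw [hQcoe, hQcoe] at hqcoe
    have hco : ⟪F ((yf tst : E) + tst • e), e⟫ = ⟪b, e⟫ := htst
    rw [hco] at hqcoe
    exact sub_left_injective hqcoe


set_option maxHeartbeats 2000000 in
theorem minty_browder
    (V : Type*) [NormedAddCommGroup V] [NormedSpace ℝ V] [CompleteSpace V]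
    [TopologicalSpace.SeparableSpace V]
    (hrefl : Function.Surjective (NormedSpace.inclusionInDoubleDual ℝ V))
    (T : V → StrongDual ℝ V)
    (hmono : ∀ u v : V, 0 ≤ (T u - T v) (u - v))
    (hcoercive : Tendsto (fun v : V => T v v / ‖v‖) (Filter.comap norm atTop) atTop)
    (hdemi : ∀ (vk : ℕ → V) (v : V), Tendsto vk atTop (𝓝 v) →
      ∀ u : V, Tendsto (fun k => T (vk k) u) atTop (𝓝 (T v u))) :
    Function.Surjective T ∧
      ((∀ u v : V, u ≠ v → 0 < (T u - T v) (u - v)) → Function.Bijective T) := by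
  classical
  have hmono' : ∀ u v : V, T v (u - v) ≤ T u (u - v) := by
    intro u v
    have h := hmono u v
    rw [ContinuousLinearMap.sub_apply] at h
    linarith
  have key : Function.Surjective T := by
    intro f
    have : Nonempty V := ⟨0⟩
    set w : ℕ → V := TopologicalSpace.denseSeq V with hw_def
    have hw : DenseRange w := TopologicalSpace.denseRange_denseSeq V
    -- coercivity bound
    obtain ⟨R, hR⟩ : ∃ R : ℝ, ∀ v : V, R ≤ ‖v‖ → ‖f‖ + 1 ≤ T v v / ‖v‖ := by
      have h1 := hcoercive.eventually (eventually_ge_atTop (‖f‖ + 1))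
      rw [eventually_comap, eventually_atTop] at h1
      obtain ⟨R, hR⟩ := h1
      exact ⟨R, fun v hv => hR ‖v‖ hv v rfl⟩
    set R' : ℝ := max R 1 with hR'_def
    have hR'pos : (0 : ℝ) < R' := lt_of_lt_of_le one_pos (le_max_right _ _)
    -- norm bound from coercivity
    have hbound : ∀ v : V, T v v ≤ ‖f‖ * ‖v‖ → ‖v‖ ≤ R' := by
      intro v hv
      by_contra hcon
      push_neg at hcon
      have h1 : R ≤ ‖v‖ := le_trans (le_max_left _ _) hcon.le
      have h2 : (0:ℝ) < ‖v‖ := lt_trans hR'pos hcon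
      have h3 := hR v h1
      rw [le_div_iff₀ h2] at h3
      nlinarith
    -- Galerkin approximations
    set Φ : ∀ n : ℕ, EuclideanSpace ℝ (Fin n) → V :=
      fun n x => ∑ j : Fin n, x j • w (j : ℕ) with hΦ_def
    have hΦcont : ∀ n, Continuous (Φ n) := by
      intro n
      apply continuous_finset_sum
      intro j _
      exact (PiLp.continuous_apply 2 _ j).smul continuous_const
    have hΦsub : ∀ n (x y : EuclideanSpace ℝ (Fin n)), Φ n x - Φ n y = Φ n (x - y) := by
      intro n x y
      simp only [hΦ_def, ← Finset.sum_sub_distrib, ← sub_smul]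
      rfl
    have keyeval : ∀ (g : StrongDual ℝ V) (m : ℕ) (x : EuclideanSpace ℝ (Fin m)),
        g (Φ m x) = ∑ j : Fin m, x j * g (w (j : ℕ)) := by
      intro g m x
      rw [hΦ_def, map_sum]
      simp [smul_eq_mul]
    set ε : ℕ → ℝ := fun n => ((n : ℝ) + 1)⁻¹ with hε_def
    have hεpos : ∀ n, 0 < ε n := by
      intro n; positivity
    have hεle : ∀ n, ε n ≤ 1 := by
      intro n
      rw [hε_def]
      rw [inv_le_one_iff₀]
      right; push_cast; linarith [Nat.cast_nonneg (α := ℝ) n]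
    have hεlim : Tendsto ε atTop (𝓝 0) := by
      have := tendsto_one_div_add_atTop_nhds_zero_nat (𝕜 := ℝ)
      simpa [hε_def, one_div] using this
    -- solve the Galerkin systems
    have hsolve : ∀ n : ℕ, ∃ x : EuclideanSpace ℝ (Fin n),
        ∀ j : Fin n, T (Φ n x) (w (j : ℕ)) + ε n * x j = f (w (j : ℕ)) := by
      intro n
      set Fn : EuclideanSpace ℝ (Fin n) → EuclideanSpace ℝ (Fin n) :=
        fun x => WithLp.toLp 2 (fun j => T (Φ n x) (w (j : ℕ)) + ε n * x j : Fin n → ℝ) with hFn_def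
      have hFncont : Continuous Fn := by
        have : Continuous fun x : EuclideanSpace ℝ (Fin n) => (fun j =>
            T (Φ n x) (w (j : ℕ)) + ε n * x j : Fin n → ℝ) := by
          apply continuous_pi
          intro j
          apply Continuous.add
          · apply SeqContinuous.continuous
            intro xk x hxk
            exact hdemi (fun k => Φ n (xk k)) (Φ n x)
              (((hΦcont n).tendsto x).comp hxk) (w (j : ℕ))
          · exact continuous_const.mul (PiLp.continuous_apply 2 _ j)
        exact (PiLp.continuous_toLp 2 _).comp this
      have hFnmono : ∀ x y : EuclideanSpace ℝ (Fin n),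
          ε n * ‖x - y‖ ^ 2 ≤ ⟪Fn x - Fn y, x - y⟫ := by
        intro x y
        have hexp : ⟪Fn x - Fn y, x - y⟫
            = (T (Φ n x) - T (Φ n y)) (Φ n x - Φ n y) + ε n * ⟪x - y, x - y⟫ := by
          rw [hΦsub, keyeval]
          simp only [PiLp.inner_apply, RCLike.inner_apply, conj_trivial, PiLp.sub_apply,
            hFn_def, ContinuousLinearMap.sub_apply]
          rw [Finset.mul_sum, ← Finset.sum_add_distrib]
          apply Finset.sum_congr rfl
          intro j _
          ring
        rw [hexp, real_inner_self_eq_norm_sq]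
        have := hmono (Φ n x) (Φ n y)
        nlinarith
      obtain ⟨x, hx⟩ := mb_strongMono_surjective n (EuclideanSpace ℝ (Fin n))
        finrank_euclideanSpace_fin (ε n) (hεpos n) Fn hFncont hFnmono
        (WithLp.toLp 2 (fun j => f (w (j : ℕ)) : Fin n → ℝ))
      refine ⟨x, fun j => ?_⟩
      have := congrArg (fun v => v j) hx
      simpa [hFn_def] using this
    choose x hx using hsolve
    set u : ℕ → V := fun n => Φ n (x n) with hu_def
    set S : ℕ → ℝ := fun n => ∑ j : Fin n, (x n j) ^ 2 with hS_def
    have hSpos : ∀ n, 0 ≤ S n := fun n => Finset.sum_nonneg fun j _ => sq_nonneg _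
    have htest : ∀ n, T (u n) (u n) + ε n * S n = f (u n) := by
      intro n
      rw [hu_def]
      rw [keyeval f n (x n), keyeval (T (Φ n (x n))) n (x n), hS_def]
      rw [Finset.mul_sum, ← Finset.sum_add_distrib]
      apply Finset.sum_congr rfl
      intro j _
      rw [← hx n j]
      ring
    have hTuu : ∀ n, T (u n) (u n) ≤ f (u n) := by
      intro n
      have h1 := htest n
      nlinarith [mul_nonneg (hεpos n).le (hSpos n)]
    have hub : ∀ n, ‖u n‖ ≤ R' := by
      intro n
      apply hbound
      calc T (u n) (u n) ≤ f (u n) := hTuu n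
        _ ≤ ‖f (u n)‖ := le_abs_self _
        _ ≤ ‖f‖ * ‖u n‖ := f.le_opNorm _
    set C : ℝ := (‖f‖ + ‖T 0‖) * R' with hC_def
    have hCpos : 0 ≤ C := by
      apply mul_nonneg _ hR'pos.le
      positivity
    have hSb : ∀ n, ε n * S n ≤ C := by
      intro n
      have h1 : T 0 (u n) ≤ T (u n) (u n) := by
        have := hmono' (u n) 0
        simpa using this
      have h2 : ε n * S n = f (u n) - T (u n) (u n) := by linarith [htest n]
      have h3 : f (u n) ≤ ‖f‖ * ‖u n‖ := le_trans (le_abs_self _) (f.le_opNorm _)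
      have h4 : -(‖T 0‖ * ‖u n‖) ≤ T 0 (u n) := by
        have := (T 0).le_opNorm (u n)
        have h5 := abs_le.mp (le_trans le_rfl this : |T 0 (u n)| ≤ ‖T 0‖ * ‖u n‖)
        linarith [h5.1]
      have h6 := hub n
      have h7 : (0:ℝ) ≤ ‖u n‖ := norm_nonneg _
      rw [h2, hC_def]
      nlinarith [norm_nonneg f, norm_nonneg (T 0)]
    -- coefficient error bound
    have hcoeff : ∀ n (j : Fin n), |ε n * x n j| ≤ Real.sqrt (ε n * C) := by
      intro n j
      rw [abs_mul, abs_of_pos (hεpos n)]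
      rw [show ε n * |x n j| = Real.sqrt ((ε n * |x n j|) ^ 2) by
        rw [Real.sqrt_sq (by positivity)]]
      apply Real.sqrt_le_sqrt
      have h1 : (x n j) ^ 2 ≤ S n := by
        rw [hS_def]
        exact Finset.single_le_sum (fun i _ => sq_nonneg (x n i)) (Finset.mem_univ j)
      have h2 := hSb n
      have h3 := hεpos n
      have h4 := hεle n
      have h5 := hSpos n
      calc (ε n * |x n j|) ^ 2 = ε n * (ε n * (x n j)^2) := by rw [mul_pow, sq_abs]; ring
        _ ≤ ε n * (ε n * S n) := by gcongr
        _ ≤ ε n * C := by gcongr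
    -- limits of T (u n) at Galerkin vectors
    have hTlim : ∀ (m : ℕ) (cv : EuclideanSpace ℝ (Fin m)),
        Tendsto (fun n => T (u n) (Φ m cv)) atTop (𝓝 (f (Φ m cv))) := by
      intro m cv
      have h0 : Tendsto (fun n => T (u n) (Φ m cv) - f (Φ m cv)) atTop (𝓝 0) := by
        apply squeeze_zero_norm'
          (a := fun n => (∑ j : Fin m, |cv j|) * Real.sqrt (ε n * C))
        · rw [eventually_atTop]
          refine ⟨m, fun n hn => ?_⟩
          have heq : T (u n) (Φ m cv) - f (Φ m cv)
              = -∑ j : Fin m, cv j * (ε n * x n ⟨(j : ℕ), lt_of_lt_of_le j.2 hn⟩) := by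
            rw [keyeval (T (u n)) m cv, keyeval f m cv]
            rw [← Finset.sum_sub_distrib, ← Finset.sum_neg_distrib]
            apply Finset.sum_congr rfl
            intro j _
            have hxx := hx n ⟨(j : ℕ), lt_of_lt_of_le j.2 hn⟩
            linear_combination (cv j) * hxx
          rw [heq, Real.norm_eq_abs, abs_neg]
          calc |∑ j : Fin m, cv j * (ε n * x n ⟨(j : ℕ), lt_of_lt_of_le j.2 hn⟩)|
              ≤ ∑ j : Fin m, |cv j * (ε n * x n ⟨(j : ℕ), lt_of_lt_of_le j.2 hn⟩)| :=
                Finset.abs_sum_le_sum_abs _ _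
            _ ≤ ∑ j : Fin m, |cv j| * Real.sqrt (ε n * C) := by
                apply Finset.sum_le_sum
                intro j _
                rw [abs_mul]
                exact mul_le_mul_of_nonneg_left (hcoeff n _) (abs_nonneg _)
            _ = (∑ j : Fin m, |cv j|) * Real.sqrt (ε n * C) := by
                rw [Finset.sum_mul]
        · have h1 : Tendsto (fun n => ε n * C) atTop (𝓝 0) := by
            simpa using hεlim.mul_const C
          have h2 : Tendsto (fun n => Real.sqrt (ε n * C)) atTop (𝓝 0) := by
            have := (Real.continuous_sqrt.tendsto 0).comp h1
            simpa [Function.comp_def] using this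
          simpa using h2.const_mul (∑ j : Fin m, |cv j|)
      have := h0.add_const (f (Φ m cv))
      simpa using this
    -- weak-* cluster point of the double-dual images
    set J := NormedSpace.inclusionInDoubleDual ℝ V with hJ_def
    set sq : ℕ → WeakDual ℝ (StrongDual ℝ V) :=
      fun n => StrongDual.toWeakDual (J (u n)) with hsq_def
    have hsqB : ∀ n, sq n ∈ WeakDual.toStrongDual ⁻¹' Metric.closedBall 0 R' := by
      intro n
      simp only [Set.mem_preimage, Metric.mem_closedBall]
      convert (show ‖WeakDual.toStrongDual (sq n)‖ ≤ R' from ?_) using 1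
      · exact dist_zero_right (WeakDual.toStrongDual (sq n))
      calc ‖WeakDual.toStrongDual (sq n)‖ = ‖J (u n)‖ := rfl
        _ ≤ ‖u n‖ := NormedSpace.double_dual_bound ℝ V (u n)
        _ ≤ R' := hub n
    obtain ⟨lw, hlwB, hlw⟩ :=
      (WeakDual.isCompact_closedBall (𝕜 := ℝ) (E := StrongDual ℝ V) 0 R').exists_clusterPt
        (f := map sq atTop) (le_principal_iff.mpr (mem_map.mpr (Eventually.of_forall hsqB)))
    obtain ⟨u₀, hu₀⟩ := hrefl (WeakDual.toStrongDual lw)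
    set Fl : Filter ℕ := atTop ⊓ comap sq (𝓝 lw) with hFl_def
    have hFlne : Fl.NeBot := by
      apply Filter.NeBot.of_map (m := sq)
      rw [hFl_def, Filter.push_pull]
      rw [ClusterPt] at hlw
      rw [inf_comm]
      exact hlw
    haveI := hFlne
    have hFlle : Fl ≤ atTop := inf_le_left
    have hsql : Tendsto sq Fl (𝓝 lw) := tendsto_comap.mono_left inf_le_right
    have hweak : ∀ g : StrongDual ℝ V, Tendsto (fun n => g (u n)) Fl (𝓝 (g u₀)) := by
      intro g
      have h1 : Tendsto (fun n => sq n g) Fl (𝓝 (lw g)) :=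
        ((WeakDual.eval_continuous g).tendsto lw).comp hsql
      have h2 : ∀ n, sq n g = g (u n) := fun n => rfl
      have h3 : lw g = g u₀ := by
        calc lw g = (WeakDual.toStrongDual lw) g := rfl
          _ = (J u₀) g := by rw [hu₀]
          _ = g u₀ := rfl
      simp only [h2, h3] at h1
      exact h1
    -- the Minty inequality at Galerkin points
    have claim1 : ∀ (m : ℕ) (cv : EuclideanSpace ℝ (Fin m)),
        0 ≤ (f - T (Φ m cv)) (u₀ - Φ m cv) := by
      intro m cv
      set v := Φ m cv with hv_def
      have hBpos : ∀ n, 0 ≤ f (u n) - T (u n) v - T v (u n) + T v v := by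
        intro n
        have h1 := hmono (u n) v
        simp only [ContinuousLinearMap.sub_apply, map_sub] at h1
        have h2 := hTuu n
        linarith
      have hBlim : Tendsto (fun n => f (u n) - T (u n) v - T v (u n) + T v v) Fl
          (𝓝 (f u₀ - f v - T v u₀ + T v v)) :=
        (((hweak f).sub ((hTlim m cv).mono_left hFlle)).sub (hweak (T v))).add_const _
      have h0 := ge_of_tendsto' hBlim hBpos
      simp only [ContinuousLinearMap.sub_apply, map_sub]
      linarith
    -- extend the Minty inequality to all of V by density
    have claim2 : ∀ v : V, 0 ≤ (f - T v) (u₀ - v) := by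
      intro v
      have hsub : Set.range w ⊆ {z : V | ∃ m cv, z = Φ m cv} := by
        rintro z ⟨i, rfl⟩
        refine ⟨i + 1, WithLp.toLp 2 (fun j => if (j : ℕ) = i then 1 else 0 : Fin (i+1) → ℝ), ?_⟩
        show w i = ∑ j : Fin (i + 1), (if ((j : ℕ) = i) then (1 : ℝ) else 0) • w (j : ℕ)
        rw [Finset.sum_eq_single (⟨i, Nat.lt_succ_self i⟩ : Fin (i + 1))]
        · simp
        · intro j _ hj
          have hne : (j : ℕ) ≠ i := fun h => hj (Fin.ext h)
          simp [hne]
        · intro h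
          exact absurd (Finset.mem_univ _) h
      have hD : Dense {z : V | ∃ m cv, z = Φ m cv} := hw.mono hsub
      obtain ⟨d, hdD, hdv⟩ := mem_closure_iff_seq_limit.mp (hD v)
      obtain ⟨M, hM⟩ : ∃ M, ∀ k, ‖T (d k)‖ ≤ M := by
        apply banach_steinhaus
        intro z
        obtain ⟨C1, hC1⟩ := (hdemi d v hdv z).norm.bddAbove_range
        exact ⟨C1, fun k => hC1 (Set.mem_range_self k)⟩
      have h1 : Tendsto (fun k => f (d k)) atTop (𝓝 (f v)) := (f.continuous.tendsto v).comp hdv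
      have h2 : Tendsto (fun k => T (d k) u₀) atTop (𝓝 (T v u₀)) := hdemi d v hdv u₀
      have h3 : Tendsto (fun k => T (d k) (d k)) atTop (𝓝 (T v v)) := by
        have h4 : Tendsto (fun k => T (d k) (d k) - T (d k) v) atTop (𝓝 0) := by
          apply squeeze_zero_norm (a := fun k => M * ‖d k - v‖)
          · intro k
            calc ‖T (d k) (d k) - T (d k) v‖ = ‖T (d k) (d k - v)‖ := by rw [map_sub]
              _ ≤ ‖T (d k)‖ * ‖d k - v‖ := (T (d k)).le_opNorm _
              _ ≤ M * ‖d k - v‖ := mul_le_mul_of_nonneg_right (hM k) (norm_nonneg _)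
          · have h5 : Tendsto (fun k => ‖d k - v‖) atTop (𝓝 0) := by
              have := tendsto_iff_norm_sub_tendsto_zero.mp hdv
              simpa using this
            simpa using h5.const_mul M
        have h6 : Tendsto (fun k => T (d k) v) atTop (𝓝 (T v v)) := hdemi d v hdv v
        have h7 := h4.add h6
        simp only [sub_add_cancel, zero_add] at h7
        exact h7
      have hA : Tendsto (fun k => f u₀ - f (d k) - T (d k) u₀ + T (d k) (d k)) atTop
          (𝓝 (f u₀ - f v - T v u₀ + T v v)) :=
        ((tendsto_const_nhds.sub h1).sub h2).add h3
      have hApos : ∀ k, 0 ≤ f u₀ - f (d k) - T (d k) u₀ + T (d k) (d k) := by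
        intro k
        obtain ⟨m, cv, hmc⟩ := hdD k
        have h8 := claim1 m cv
        rw [← hmc] at h8
        simp only [ContinuousLinearMap.sub_apply, map_sub] at h8
        linarith
      have h0 := ge_of_tendsto' hA hApos
      simp only [ContinuousLinearMap.sub_apply, map_sub]
      linarith
    -- Minty's trick
    have hzero : ∀ z : V, f z ≤ T u₀ z := by
      intro z
      set tk : ℕ → ℝ := fun k => ((k : ℝ) + 1)⁻¹ with htk_def
      have htkpos : ∀ k, 0 < tk k := fun k => by positivity
      have htklim : Tendsto tk atTop (𝓝 0) := by
        simpa [htk_def, one_div] using tendsto_one_div_add_atTop_nhds_zero_nat (𝕜 := ℝ)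
      have hvk : Tendsto (fun k => u₀ + tk k • z) atTop (𝓝 u₀) := by
        have h1 := (tendsto_const_nhds (x := u₀) (f := atTop (α := ℕ))).add
          (htklim.smul_const z)
        simpa using h1
      have hle : ∀ k, f z - T (u₀ + tk k • z) z ≤ 0 := by
        intro k
        have h1 := claim2 (u₀ + tk k • z)
        have h2 : u₀ - (u₀ + tk k • z) = (-(tk k)) • z := by
          rw [neg_smul]; abel
        rw [h2] at h1
        simp only [ContinuousLinearMap.sub_apply, map_smul, smul_eq_mul] at h1
        have h3 := htkpos k
        nlinarith
      have hlim : Tendsto (fun k => f z - T (u₀ + tk k • z) z) atTop (𝓝 (f z - T u₀ z)) :=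
        tendsto_const_nhds.sub (hdemi _ u₀ hvk z)
      have := le_of_tendsto' hlim hle
      linarith
    refine ⟨u₀, ?_⟩
    ext z
    have h1 := hzero z
    have h2 := hzero (-z)
    simp only [map_neg] at h2
    linarith
  refine ⟨key, fun hstrict => ⟨fun a b hab => ?_, key⟩⟩
  by_contra hne
  have h1 := hstrict a b hne
  rw [hab, sub_self] at h1
  simp at h1
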